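/- Product structure axioms: let X and Y carry ℂ^×-actions e_i^c together with functions ε_i, φ_i with φ_i = γ_i ε_i, satisfying ε_i(e_i^c(x)) = c^{−1} ε_i(x), φ_i(e_i^c(x)) = c φ_i(x), and γ_i(e_i^c(x)) = c² γ_i(x). Define on X × Y: γ_i(x,y) := γ_i(x)γ_i(y), ε_i(x,y) := ε_i(x) + ε_i(x)ε_i(y)/φ_i(x), and e_i^c(x,y) := (e_i^{c₁}(x), e_i^{c/c₁}(y)) where c₁ = (c φ_i(x) + ε_i(y))/(φ_i(x) + ε_i(y)). Then ε_i(e_i^c(x,y)) = c^{−1} ε_i(x,y) and γ_i(e_i^c(x,y)) = c² γ_i(x,y), and e_i^{c} ∘ e_i^{c'} = e_i^{cc'} on X × Y. -/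

import Mathlib

/-- The Berenstein–Kazhdan product action on `X × Y`:
`e_i^c(x,y) = (e_i^{c₁} x, e_i^{c/c₁} y)` with
`c₁ = (c φ_i(x) + ε_i(y))/(φ_i(x) + ε_i(y))`, `φ_i(x) = γ_i(x) ε_i(x)`. -/
noncomputable def prodE {X Y : Type*} (eX : ℂ → X → X) (eY : ℂ → Y → Y)
    (epsX gamX : X → ℂ) (epsY : Y → ℂ) (c : ℂ) (p : X × Y) : X × Y :=
  (eX ((c * (gamX p.1 * epsX p.1) + epsY p.2) / (gamX p.1 * epsX p.1 + epsY p.2)) p.1,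
   eY (c / ((c * (gamX p.1 * epsX p.1) + epsY p.2) / (gamX p.1 * epsX p.1 + epsY p.2))) p.2)

/-- `ε_i(x,y) := ε_i(x) + ε_i(x) ε_i(y)/φ_i(x)`. -/
noncomputable def prodEps {X Y : Type*} (epsX gamX : X → ℂ) (epsY : Y → ℂ)
    (p : X × Y) : ℂ :=
  epsX p.1 + epsX p.1 * epsY p.2 / (gamX p.1 * epsX p.1)

/-- `γ_i(x,y) := γ_i(x) γ_i(y)`. -/
noncomputable def prodGam {X Y : Type*} (gamX : X → ℂ) (gamY : Y → ℂ)
    (p : X × Y) : ℂ :=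
  gamX p.1 * gamY p.2


lemma bkAux1 (a b c e : ℂ) (ha : a ≠ 0) (hb : b ≠ 0) (hc : c ≠ 0)
    (hd1 : a + b ≠ 0) (hd2 : c * a + b ≠ 0) :
    ((c*a+b)/(a+b))⁻¹ * e + ((c*a+b)/(a+b))⁻¹ * e * ((c/((c*a+b)/(a+b)))⁻¹ * b) /
        ((c*a+b)/(a+b) * a)
      = c⁻¹ * (e + e * b / a) := by
  generalize hU : c*a+b = u at hd2 ⊢
  generalize hV : a+b = v at hd1 ⊢
  have hu : u ≠ 0 := hd2
  have hv : v ≠ 0 := hd1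
  field_simp
  subst hU hV
  ring

lemma bkAux2 (g h c k : ℂ) (hk : k ≠ 0) (hc : c ≠ 0) :
    k ^ 2 * g * ((c / k) ^ 2 * h) = c ^ 2 * (g * h) := by
  field_simp

lemma bkAuxC (a b c c' : ℂ) (hc : c ≠ 0)
    (hd1 : a + b ≠ 0) (hd2 : c * a + b ≠ 0)
    (hD : (c*a+b)/(a+b) * a + (c/((c*a+b)/(a+b)))⁻¹ * b ≠ 0) :
    (c' * ((c*a+b)/(a+b) * a) + (c/((c*a+b)/(a+b)))⁻¹ * b) /
        ((c*a+b)/(a+b) * a + (c/((c*a+b)/(a+b)))⁻¹ * b)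
      = (c * c' * a + b) / (c * a + b) := by
  rw [div_eq_div_iff hD hd2, inv_div]
  generalize hU : c*a+b = u at hd2 ⊢
  generalize hV : a+b = v at hd1 ⊢
  have hu : u ≠ 0 := hd2
  have hv : v ≠ 0 := hd1
  field_simp
  subst hU hV
  ring

lemma bkAux3 (a b c c' : ℂ)
    (hd1 : a + b ≠ 0) (hd2 : c * a + b ≠ 0) :
    (c * c' * a + b) / (c * a + b) * ((c*a+b)/(a+b)) = (c * c' * a + b)/(a+b) := by
  rw [div_mul_div_comm, div_eq_div_iff (mul_ne_zero hd2 hd1) hd1]; ring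

lemma bkAux4 (a b c c' : ℂ)
    (hd1 : a + b ≠ 0) (hd2 : c * a + b ≠ 0) (hd5 : c * c' * a + b ≠ 0) :
    c' / ((c * c' * a + b) / (c * a + b)) * (c / ((c*a+b)/(a+b)))
      = c * c' / ((c * c' * a + b)/(a+b)) := by
  rw [div_div_eq_mul_div, div_div_eq_mul_div, div_div_eq_mul_div, div_mul_div_comm,
    div_eq_div_iff (mul_ne_zero hd5 hd2) hd5]
  ring

theorem stmt15 {X Y : Type*} (eX : ℂ → X → X) (eY : ℂ → Y → Y)
    (epsX gamX : X → ℂ) (epsY gamY : Y → ℂ)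
    (hXeps : ∀ c : ℂ, c ≠ 0 → ∀ x, epsX (eX c x) = c⁻¹ * epsX x)
    (hXgam : ∀ c : ℂ, c ≠ 0 → ∀ x, gamX (eX c x) = c ^ 2 * gamX x)
    (hXphi : ∀ c : ℂ, c ≠ 0 → ∀ x, gamX (eX c x) * epsX (eX c x) = c * (gamX x * epsX x))
    (hYeps : ∀ c : ℂ, c ≠ 0 → ∀ y, epsY (eY c y) = c⁻¹ * epsY y)
    (hYgam : ∀ c : ℂ, c ≠ 0 → ∀ y, gamY (eY c y) = c ^ 2 * gamY y)
    (hYphi : ∀ c : ℂ, c ≠ 0 → ∀ y, gamY (eY c y) * epsY (eY c y) = c * (gamY y * epsY y))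
    (hXmul : ∀ c c' : ℂ, ∀ x, eX c (eX c' x) = eX (c * c') x)
    (hYmul : ∀ c c' : ℂ, ∀ y, eY c (eY c' y) = eY (c * c') y)
    (c c' : ℂ) (hc : c ≠ 0) (hc' : c' ≠ 0) (p : X × Y)
    (h1 : epsX p.1 ≠ 0) (h2 : gamX p.1 ≠ 0) (h3 : epsY p.2 ≠ 0) (h4 : gamY p.2 ≠ 0)
    (hd1 : gamX p.1 * epsX p.1 + epsY p.2 ≠ 0)
    (hd2 : c * (gamX p.1 * epsX p.1) + epsY p.2 ≠ 0)
    (hd5 : (c * c') * (gamX p.1 * epsX p.1) + epsY p.2 ≠ 0)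
    (hd3 : gamX (prodE eX eY epsX gamX epsY c p).1 * epsX (prodE eX eY epsX gamX epsY c p).1
            + epsY (prodE eX eY epsX gamX epsY c p).2 ≠ 0)
    (hd4 : c' * (gamX (prodE eX eY epsX gamX epsY c p).1 * epsX (prodE eX eY epsX gamX epsY c p).1)
            + epsY (prodE eX eY epsX gamX epsY c p).2 ≠ 0) :
    prodEps epsX gamX epsY (prodE eX eY epsX gamX epsY c p)
        = c⁻¹ * prodEps epsX gamX epsY p ∧
    prodGam gamX gamY (prodE eX eY epsX gamX epsY c p)
        = c ^ 2 * prodGam gamX gamY p ∧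
    prodE eX eY epsX gamX epsY c' (prodE eX eY epsX gamX epsY c p)
        = prodE eX eY epsX gamX epsY (c * c') p := by
  obtain ⟨x, y⟩ := p
  simp only [prodE, prodEps, prodGam] at *
  have hc1 : (c * (gamX x * epsX x) + epsY y) / (gamX x * epsX x + epsY y) ≠ 0 :=
    div_ne_zero hd2 hd1
  have hc2 : c / ((c * (gamX x * epsX x) + epsY y) / (gamX x * epsX x + epsY y)) ≠ 0 :=
    div_ne_zero hc hc1
  have he1 := hXeps _ hc1 x
  have hg1 := hXgam _ hc1 x
  have hp1 := hXphi _ hc1 x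
  have he2 := hYeps _ hc2 y
  have hg2 := hYgam _ hc2 y
  rw [hp1, he2] at hd3 hd4
  refine ⟨?_, ?_, ?_⟩
  · rw [hp1, he1, he2]
    exact bkAux1 _ _ _ _ (mul_ne_zero h2 h1) h3 hc hd1 hd2
  · rw [hg1, hg2]
    exact bkAux2 _ _ _ _ hc1 hc
  · rw [hp1, he2, bkAuxC _ _ _ _ hc hd1 hd2 hd3, hXmul, hYmul,
      bkAux3 _ _ _ _ hd1 hd2, bkAux4 _ _ _ _ hd1 hd2 hd5]
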